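/- Let P be a formal polynomial over R_max of degree n and lower degree m with full support (P_k ≠ -∞ for m ≤ k ≤ n). Then P equals its own concave hull (the coefficient map k ↦ P_k restricted to [m,n] is concave, i.e. P_{k} - P_{k-1} ≥ P_{k+1} - P_k for m < k < n) if and only if P factors as a product of linear formal polynomials: P = P_n (Y ⊕ c_1) ⋯ (Y ⊕ c_n) where c_i = P_{n-i} - P_{n-i+1} for 1 ≤ i ≤ n-m and c_i = -∞ otherwise. -/

import Mathlib

set_option linter.unusedVariables false

noncomputable section

/-- The max-plus (tropical) semifield `R_max = ℝ ∪ {-∞}`, with addition `max`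
and multiplication `+`. -/
abbrev RMax := WithBot ℝ

/-- The polynomial function `P̂(y) = max_{k ≤ n} (P_k + k·y)` of a formal
polynomial over `R_max` of degree at most `n`. -/
def tPhat (P : ℕ → RMax) (n : ℕ) (y : RMax) : RMax :=
  (Finset.range (n + 1)).sup fun k => P k + k • y

/-- The formal linear polynomial `Y ⊕ c` over `R_max`. -/
def rLin (c : RMax) : ℕ → RMax :=
  fun k => if k = 0 then c else if k = 1 then ((0 : ℝ) : RMax) else ⊥

/-- Constant formal polynomial over `R_max`. -/
def rConst (c : RMax) : ℕ → RMax := fun k => if k = 0 then c else ⊥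

/-- Max-plus Cauchy product of formal polynomials. -/
def rMul (P Q : ℕ → RMax) : ℕ → RMax :=
  fun k => (Finset.range (k + 1)).sup fun i => P i + Q (k - i)

/-- The formal polynomial `c ⊙ (Y ⊕ d₁) ⋯ (Y ⊕ d_n)`. -/
def rProdLin (c : RMax) : List RMax → ℕ → RMax
  | [] => rConst c
  | d :: ds => rMul (rLin d) (rProdLin c ds)

lemma rmul_lin_zero (d : RMax) (Q : ℕ → RMax) : rMul (rLin d) Q 0 = d + Q 0 := by
  simp [rMul, rLin]

lemma rmul_lin_succ (d : RMax) (Q : ℕ → RMax) (k : ℕ) :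
    rMul (rLin d) Q (k + 1) = max (d + Q (k + 1)) (Q k) := by
  unfold rMul
  apply le_antisymm
  · apply Finset.sup_le
    intro i hi
    match i with
    | 0 => simpa [rLin] using le_max_left (d + Q (k+1)) (Q k)
    | 1 => simpa [rLin] using le_max_right (d + Q (k+1)) (Q k)
    | (i+2) => simp [rLin]
  · apply max_le
    · have h0 : (0:ℕ) ∈ Finset.range (k+1+1) := by simp
      have := Finset.le_sup (f := fun i => rLin d i + Q (k+1-i)) h0
      simpa [rLin] using this
    · have h1 : (1:ℕ) ∈ Finset.range (k+1+1) := by simp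
      have := Finset.le_sup (f := fun i => rLin d i + Q (k+1-i)) h1
      simpa [rLin] using this

lemma rProdLin_bot (c : RMax) : ∀ (ds : List RMax) (k : ℕ), ds.length < k → rProdLin c ds k = ⊥
  | [], k, h => by
    match k, h with
    | (k+1), _ => simp [rProdLin, rConst]
  | d :: t, k, h => by
    match k, h with
    | (k+1), h =>
      have h1 : t.length < k := by simpa using h
      show rMul (rLin d) (rProdLin c t) (k+1) = ⊥
      rw [rmul_lin_succ, rProdLin_bot c t (k+1) (Nat.lt_succ_of_lt h1), rProdLin_bot c t k h1]
      simp

lemma rProdLin_eq (c : RMax) : ∀ (ds : List RMax), ds.Pairwise (· ≥ ·) → ∀ k, k ≤ ds.length →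
    rProdLin c ds k = c + (ds.take (ds.length - k)).sum := by
  intro ds
  induction ds with
  | nil =>
    intro _ k hk
    have hk0 : k = 0 := by simpa using hk
    subst hk0
    simp [rProdLin, rConst]
  | cons d t ih =>
    intro hs k hk
    obtain ⟨hd, ht⟩ := List.pairwise_cons.mp hs
    match k with
    | 0 =>
      show rMul (rLin d) (rProdLin c t) 0 = _
      rw [rmul_lin_zero, ih ht 0 (Nat.zero_le _)]
      simp only [Nat.sub_zero, List.take_length, List.length_cons]
      have : (d :: t).take (t.length + 1) = d :: t := by
        apply List.take_of_length_le; simp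
      rw [this, List.sum_cons, add_left_comm]
    | (k+1) =>
      show rMul (rLin d) (rProdLin c t) (k+1) = _
      rw [rmul_lin_succ]
      have hk' : k ≤ t.length := by simpa using hk
      rcases Nat.lt_or_ge k t.length with hlt | hge
      · have e1 := ih ht (k+1) hlt
        have e2 := ih ht k hk'
        set j := t.length - (k+1) with hj
        have hjlt : j < t.length := by omega
        have htake : t.take (t.length - k) = t.take j ++ [t[j]] := by
          have hjk : t.length - k = j + 1 := by omega
          rw [hjk, List.take_succ, List.getElem?_eq_getElem hjlt]
          simp
        rw [e1, e2, htake]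
        have hdx : t[j] ≤ d := hd _ (List.getElem_mem hjlt)
        have hmax : c + (t.take j ++ [t[j]]).sum ≤ d + (c + (t.take j).sum) := by
          calc c + (t.take j ++ [t[j]]).sum = c + (t.take j).sum + t[j] := by
                rw [List.sum_append, List.sum_cons, List.sum_nil, add_zero, add_assoc]
            _ ≤ c + (t.take j).sum + d := add_le_add_right hdx _
            _ = d + (c + (t.take j).sum) := add_comm _ _
        rw [max_eq_left hmax]
        have hlen : (d :: t).length - (k+1) = j + 1 := by simp; omega
        rw [hlen, List.take_succ_cons, List.sum_cons, add_left_comm]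
      · have hkt : k = t.length := le_antisymm hk' hge
        subst hkt
        rw [rProdLin_bot c t (t.length + 1) (Nat.lt_succ_self _), ih ht t.length le_rfl]
        simp [WithBot.add_bot]

lemma rProdLin_ge (c : RMax) : ∀ (ds s : List RMax) (k : ℕ), s.Sublist ds →
    s.length + k = ds.length → c + s.sum ≤ rProdLin c ds k := by
  intro ds
  induction ds with
  | nil =>
    intro s k hs hl
    have hnil : s = [] := List.sublist_nil.mp hs
    subst hnil
    simp at hl
    subst hl
    simp [rProdLin, rConst]
  | cons d t ih =>
    intro s k hs hl
    cases hs with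
    | cons _ hs' =>
      have hlen : s.length ≤ t.length := hs'.length_le
      simp only [List.length_cons] at hl
      obtain ⟨k', rfl⟩ : ∃ k', k = k' + 1 := ⟨k - 1, by omega⟩
      have := ih s k' hs' (by omega)
      calc c + s.sum ≤ rProdLin c t k' := this
        _ ≤ max (d + rProdLin c t (k'+1)) (rProdLin c t k') := le_max_right _ _
        _ = rProdLin c (d::t) (k'+1) := (rmul_lin_succ d _ k').symm
    | @cons_cons s' _ _ hs' =>
      simp only [List.length_cons] at hl
      match k with
      | 0 =>
        have h := ih s' 0 hs' (by omega)
        show c + (d :: s').sum ≤ rMul (rLin d) (rProdLin c t) 0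
        rw [rmul_lin_zero, List.sum_cons, add_left_comm]
        exact add_le_add_right h d
      | (k'+1) =>
        have h := ih s' (k'+1) hs' (by omega)
        show c + (d :: s').sum ≤ rMul (rLin d) (rProdLin c t) (k'+1)
        rw [rmul_lin_succ, List.sum_cons, add_left_comm]
        exact le_trans (add_le_add_right h d) (le_max_left _ _)

lemma rmax_sum_bot : ∀ (l : List RMax), (⊥ : RMax) ∈ l → l.sum = ⊥ := by
  intro l
  induction l with
  | nil => intro h; simp at h
  | cons a t ih =>
    intro h
    rw [List.sum_cons]
    rcases List.mem_cons.mp h with h | h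
    · rw [← h]; exact WithBot.bot_add _
    · rw [ih h]; exact WithBot.add_bot _

lemma rmax_sum_map (p : ℕ → ℝ) (m n : ℕ) :
    ∀ j, j ≤ n - m →
      (((List.range j).map fun i => if i + 1 ≤ n - m
          then ((p (n - (i + 1)) - p (n - (i + 1) + 1) : ℝ) : RMax) else ⊥).sum)
        = ((p (n - j) - p n : ℝ) : RMax) := by
  intro j
  induction j with
  | zero => intro _; simp
  | succ j ih =>
    intro hj
    rw [List.range_succ, List.map_append, List.sum_append, ih (by omega)]
    simp only [List.map_cons, List.map_nil, List.sum_cons, List.sum_nil, add_zero, if_pos hj]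
    rw [← WithBot.coe_add]
    rw [show n - (j + 1) + 1 = n - j from by omega]
    exact congrArg _ (by ring)

lemma rmax_gdec (p : ℕ → ℝ) (m n : ℕ)
    (hcc : ∀ k, m < k → k < n → p (k + 1) - p k ≤ p k - p (k - 1)) :
    ∀ b a, m ≤ a → a ≤ b → b < n → p (b + 1) - p b ≤ p (a + 1) - p a := by
  intro b
  induction b with
  | zero =>
    intro a _ ha _
    have : a = 0 := by omega
    subst this; exact le_rfl
  | succ b ih =>
    intro a hma hab hbn
    rcases Nat.lt_or_ge a (b+1) with h | h
    · have h2 := ih a hma (by omega) (by omega)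
      have h3 := hcc (b+1) (by omega) hbn
      simp only [Nat.add_sub_cancel] at h3
      linarith
    · have : a = b + 1 := by omega
      subst this; exact le_rfl

/-- A formal polynomial over `R_max` of degree `n` and lower degree `m` with
full support equals its own concave hull (coefficientwise concavity) if and
only if it factors as the product of linear formal polynomials
`P = P_n (Y ⊕ c₁) ⋯ (Y ⊕ c_n)` with `c_i = P_{n-i} - P_{n-i+1}` for
`1 ≤ i ≤ n - m` and `c_i = -∞` otherwise. -/
theorem rmax_concave_iff_factors (p : ℕ → ℝ) (m n : ℕ) (hmn : m ≤ n)
    (P : ℕ → RMax) (hP : ∀ k, P k = if m ≤ k ∧ k ≤ n then ((p k : ℝ) : RMax) else ⊥) :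
    (∀ k, m < k → k < n → p (k + 1) - p k ≤ p k - p (k - 1)) ↔
      P = rProdLin (P n)
        ((List.range n).map fun i =>
          if i + 1 ≤ n - m
          then ((p (n - (i + 1)) - p (n - (i + 1) + 1) : ℝ) : RMax)
          else ⊥) := by
  set f : ℕ → RMax := fun i =>
    if i + 1 ≤ n - m then ((p (n - (i + 1)) - p (n - (i + 1) + 1) : ℝ) : RMax) else ⊥ with hf
  have hPn : P n = ((p n : ℝ) : RMax) := by rw [hP]; simp [hmn]
  have hlen : ((List.range n).map f).length = n := by simp
  constructor
  · intro hcc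
    have hsort : ((List.range n).map f).Pairwise (· ≥ ·) := by
      rw [List.pairwise_map]
      refine (List.pairwise_lt_range (n := n)).imp ?_
      intro i j hij
      by_cases hj : j + 1 ≤ n - m
      · have hi : i + 1 ≤ n - m := by omega
        simp only [hf, if_pos hi, if_pos hj, ge_iff_le, WithBot.coe_le_coe]
        have := rmax_gdec p m n hcc (n - (i + 1)) (n - (j + 1)) (by omega) (by omega) (by omega)
        linarith
      · simp only [hf, if_neg hj]
        exact bot_le
    rw [hPn]
    funext k
    rcases le_or_gt k n with hk | hk
    · rw [rProdLin_eq _ _ hsort k (by rw [hlen]; exact hk), hlen]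
      have htake : ((List.range n).map f).take (n - k) = (List.range (n - k)).map f := by
        rw [← List.map_take, List.take_range, Nat.min_eq_left (by omega)]
      rw [htake]
      by_cases hmk : m ≤ k
      · rw [rmax_sum_map p m n (n - k) (by omega), hP k, if_pos ⟨hmk, hk⟩,
          show n - (n - k) = k from by omega, ← WithBot.coe_add]
        exact congrArg _ (by ring)
      · rw [hP k, if_neg (by omega)]
        have hmem : (⊥ : RMax) ∈ (List.range (n - k)).map f := by
          refine List.mem_map.mpr ⟨n - m, List.mem_range.mpr (by omega), ?_⟩
          simp only [hf]
          rw [if_neg (by omega)]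
        rw [rmax_sum_bot _ hmem, WithBot.add_bot]
    · rw [rProdLin_bot _ _ k (by rw [hlen]; exact hk), hP k, if_neg (by omega)]
  · intro hEq k hmk hkn
    have hsub : (((List.range (n - k - 1)).map f) ++ [f (n - k)]).Sublist ((List.range n).map f) := by
      rw [show ((List.range (n - k - 1)).map f) ++ [f (n - k)]
          = (List.range (n - k - 1) ++ [n - k]).map f from by simp]
      apply List.Sublist.map
      have hA : (List.range (n - k - 1) ++ [n - k]).Sublist
          (List.range (n - k - 1) ++ [n - k - 1] ++ [n - k]) := by
        rw [List.append_assoc]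
        exact List.Sublist.append_left (List.sublist_cons_self _ _) _
      have hB : List.range (n - k - 1) ++ [n - k - 1] ++ [n - k] = List.range (n - k + 1) := by
        rw [show n - k + 1 = (n - k - 1) + 1 + 1 from by omega, List.range_succ, List.range_succ,
          show n - k - 1 + 1 = n - k from by omega]
      rw [hB] at hA
      exact hA.trans (List.range_sublist.mpr (by omega))
    have hle := rProdLin_ge (P n) ((List.range n).map f) _ k hsub
      (by simp only [List.length_append, List.length_map, List.length_range, List.length_cons,
            List.length_nil]; omega)
    rw [← hEq] at hle
    have hfnk : f (n - k) = ((p (k - 1) - p k : ℝ) : RMax) := by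
      simp only [hf]
      rw [if_pos (by omega), show n - (n - k + 1) + 1 = k from by omega,
        show n - (n - k + 1) = k - 1 from by omega]
    have hsumeq : (((List.range (n - k - 1)).map f) ++ [f (n - k)]).sum
        = ((p (k + 1) - p n + (p (k - 1) - p k) : ℝ) : RMax) := by
      rw [List.sum_append, List.sum_cons, List.sum_nil, add_zero,
        rmax_sum_map p m n (n - k - 1) (by omega),
        show n - (n - k - 1) = k + 1 from by omega, hfnk, ← WithBot.coe_add]
    rw [hsumeq, hPn, hP k, if_pos ⟨le_of_lt hmk, le_of_lt hkn⟩, ← WithBot.coe_add,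
      WithBot.coe_le_coe] at hle
    linarith
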